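/- Let T be a positive semidefinite Hermitian matrix on ℂ^d and let ψ ∈ ℂ^d be a unit vector with ⟨ψ, Tψ⟩ > 0. Let φ = (√T ψ) / ‖√T ψ‖, where √T denotes the positive semidefinite square root of T. Then ⟨φ, Tφ⟩ ≥ ⟨ψ, Tψ⟩. -/

import Mathlib

open Matrix ComplexOrder
open scoped InnerProductSpace

noncomputable def Matrix.PosSemidef.sqrt {n 𝕜 : Type*} [Fintype n] [DecidableEq n] [RCLike 𝕜]
    {A : Matrix n n 𝕜} (hA : A.PosSemidef) : Matrix n n 𝕜 :=
  hA.1.eigenvectorUnitary.1 * diagonal ((↑) ∘ (√·) ∘ hA.1.eigenvalues) *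
  (star hA.1.eigenvectorUnitary : Matrix n n 𝕜)

theorem Matrix.PosSemidef.sqrt_isHermitian' {n 𝕜 : Type*} [Fintype n] [DecidableEq n] [RCLike 𝕜]
    {A : Matrix n n 𝕜} (hA : A.PosSemidef) : hA.sqrt.IsHermitian := by
  unfold Matrix.PosSemidef.sqrt
  unfold Matrix.IsHermitian
  rw [conjTranspose_mul, conjTranspose_mul, diagonal_conjTranspose, ← mul_assoc]
  simp [Matrix.star_eq_conjTranspose, Function.comp_def]
  congr 3
  funext x
  simp

theorem Matrix.PosSemidef.sqrt_mul_self {n 𝕜 : Type*} [Fintype n] [DecidableEq n] [RCLike 𝕜]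
    {A : Matrix n n 𝕜} (hA : A.PosSemidef) : hA.sqrt * hA.sqrt = A := by
  unfold Matrix.PosSemidef.sqrt
  conv_rhs => rw [hA.1.spectral_theorem, Unitary.conjStarAlgAut_apply]
  have hU : (star hA.1.eigenvectorUnitary : Matrix n n 𝕜) * hA.1.eigenvectorUnitary.1 = 1 :=
    Unitary.star_mul_self_of_mem hA.1.eigenvectorUnitary.2
  calc _ = hA.1.eigenvectorUnitary.1 * diagonal ((↑) ∘ (√·) ∘ hA.1.eigenvalues) *
      ((star hA.1.eigenvectorUnitary : Matrix n n 𝕜) * hA.1.eigenvectorUnitary.1) *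
      diagonal ((↑) ∘ (√·) ∘ hA.1.eigenvalues) * (star hA.1.eigenvectorUnitary : Matrix n n 𝕜) := by
        simp only [Matrix.mul_assoc]
    _ = _ := by
      rw [hU, Matrix.mul_one, Matrix.mul_assoc _ (diagonal _) (diagonal _), diagonal_mul_diagonal]
      refine congrArg (fun M => _ * M * _) (congrArg diagonal ?_)
      funext i
      simp only [Function.comp_apply]
      rw [← RCLike.ofReal_mul, Real.mul_self_sqrt (hA.eigenvalues_nonneg i)]

/-- If `T` is positive semidefinite on `ℂ^d`, `ψ` a unit vector with
`⟨ψ, Tψ⟩ > 0`, and `φ = √T ψ / ‖√T ψ‖`, then `⟨φ, Tφ⟩ ≥ ⟨ψ, Tψ⟩`. -/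
theorem stmt_2 (d : ℕ) (T : Matrix (Fin d) (Fin d) ℂ) (hT : T.PosSemidef)
    (ψ : Fin d → ℂ) (hψ : star ψ ⬝ᵥ ψ = 1)
    (hpos : 0 < (star ψ ⬝ᵥ (T *ᵥ ψ)).re)
    (φ : Fin d → ℂ)
    (hφ : φ = ((Real.sqrt ((star (hT.sqrt *ᵥ ψ) ⬝ᵥ (hT.sqrt *ᵥ ψ)).re) : ℂ))⁻¹ •
      (hT.sqrt *ᵥ ψ)) :
    (star ψ ⬝ᵥ (T *ᵥ ψ)).re ≤ (star φ ⬝ᵥ (T *ᵥ φ)).re := by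
  set S := hT.sqrt with hS
  set χ := S *ᵥ ψ with hχ
  have hSherm : S.IsHermitian := hT.sqrt_isHermitian'
  have hTψ : T *ᵥ ψ = S *ᵥ χ := by
    rw [hχ, mulVec_mulVec, hT.sqrt_mul_self]
  have keygen : ∀ v : Fin d → ℂ, star v ⬝ᵥ (S *ᵥ (S *ᵥ v)) = star (S *ᵥ v) ⬝ᵥ (S *ᵥ v) := by
    intro v
    rw [dotProduct_mulVec, star_mulVec, hSherm.eq]
  have key : star ψ ⬝ᵥ (T *ᵥ ψ) = star χ ⬝ᵥ χ := by
    rw [hTψ, hχ, keygen]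
  set a := (star χ ⬝ᵥ χ).re with ha
  have ha_pos : 0 < a := by rw [ha, ← key]; exact hpos
  -- Cauchy–Schwarz : a ^ 2 ≤ ‖S χ‖²
  have cs : a ^ 2 ≤ (star (S *ᵥ χ) ⬝ᵥ (S *ᵥ χ)).re := by
    let x : EuclideanSpace ℂ (Fin d) := (WithLp.equiv 2 _).symm ψ
    let y : EuclideanSpace ℂ (Fin d) := (WithLp.equiv 2 _).symm (S *ᵥ χ)
    have h1 : ⟪x, y⟫_ℂ = star ψ ⬝ᵥ (S *ᵥ χ) := (EuclideanSpace.inner_toLp_toLp _ _).trans (dotProduct_comm _ _)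
    have hxy : star ψ ⬝ᵥ (S *ᵥ χ) = star χ ⬝ᵥ χ := by rw [← hTψ, key]
    have hnx : ‖x‖ ^ 2 = 1 := by
      rw [← @inner_self_eq_norm_sq ℂ]
      have h2 : ⟪x, x⟫_ℂ = star ψ ⬝ᵥ ψ := (EuclideanSpace.inner_toLp_toLp _ _).trans (dotProduct_comm _ _)
      rw [h2, hψ]
      simp
    have hny : ‖y‖ ^ 2 = (star (S *ᵥ χ) ⬝ᵥ (S *ᵥ χ)).re := by
      rw [← @inner_self_eq_norm_sq ℂ]
      have h2 : ⟪y, y⟫_ℂ = star (S *ᵥ χ) ⬝ᵥ (S *ᵥ χ) := (EuclideanSpace.inner_toLp_toLp _ _).trans (dotProduct_comm _ _)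
      rw [h2, RCLike.re_to_complex]
    have hcs := norm_inner_le_norm (𝕜 := ℂ) x y
    have hre : a ≤ ‖⟪x, y⟫_ℂ‖ := by
      rw [h1, hxy, ha]
      exact Complex.re_le_norm _
    calc a ^ 2 ≤ ‖⟪x, y⟫_ℂ‖ ^ 2 := by nlinarith [norm_nonneg (⟪x, y⟫_ℂ)]
      _ ≤ (‖x‖ * ‖y‖) ^ 2 := by nlinarith [norm_nonneg (⟪x, y⟫_ℂ), norm_nonneg x, norm_nonneg y]
      _ = (star (S *ᵥ χ) ⬝ᵥ (S *ᵥ χ)).re := by rw [mul_pow, hnx, hny, one_mul]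
  -- Compute the RHS
  set c := (star (S *ᵥ χ) ⬝ᵥ (S *ᵥ χ)).re with hc
  have hrhs : (star φ ⬝ᵥ (T *ᵥ φ)).re = a⁻¹ * c := by
    have hstarφ : star φ = ((Real.sqrt a : ℂ))⁻¹ • star χ := by
      rw [hφ, star_smul, star_inv₀]
      congr 1
      simp
    have hTφ : T *ᵥ φ = ((Real.sqrt a : ℂ))⁻¹ • (T *ᵥ χ) := by
      rw [hφ, mulVec_smul]
    rw [hstarφ, hTφ, smul_dotProduct, dotProduct_smul, smul_eq_mul, smul_eq_mul, ← mul_assoc]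
    have hχTχ : star χ ⬝ᵥ (T *ᵥ χ) = star (S *ᵥ χ) ⬝ᵥ (S *ᵥ χ) := by
      rw [← hT.sqrt_mul_self, ← hS, ← mulVec_mulVec, keygen]
    rw [hχTχ]
    have hsq : ((Real.sqrt a : ℂ))⁻¹ * ((Real.sqrt a : ℂ))⁻¹ = ((a⁻¹ : ℝ) : ℂ) := by
      rw [← mul_inv, ← Complex.ofReal_mul, Real.mul_self_sqrt ha_pos.le, Complex.ofReal_inv]
    rw [hsq, Complex.re_ofReal_mul]
  rw [key, ← ha, hrhs, ← sub_nonneg]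
  have heq : a⁻¹ * c - a = a⁻¹ * (c - a ^ 2) := by field_simp
  rw [heq]
  exact mul_nonneg (inv_nonneg.mpr ha_pos.le) (by linarith)
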